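/- arXiv:2206.12345 — 5 statements merged into one kernel-verified Lean document; each statement's English description precedes it below -/
import Mathlib

section
/- For every P ∈ T_K there exists a point Q ∈ V_K representing an element of the closure of the φ-orbit of P such that N(Q) = M(Q) = M(P). -/
open NumberField IntermediateField

/-- For every `P ∈ T_K` there exists a point `Q ∈ V_K` representing an element of the
closure of the `φ`-orbit of `P` such that `N(Q) = M(Q) = M(P)`. -/
theorem exists_rep_in_orbit_closure_with_norm_eq
    (D : ℕ) (hD : Squarefree D) (hD1 : 1 < D)
    (K : IntermediateField ℚ ℝ) (hK : K = ℚ⟮(Real.sqrt D : ℝ)⟯)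
    (L : AddSubgroup (ℝ × ℝ))
    (Nm : ℝ × ℝ → ℝ) (hNm : ∀ p, Nm p = |p.1 * p.2|)
    (Mbar : (ℝ × ℝ) ⧸ L → ℝ) (husc : UpperSemicontinuous Mbar)
    (φe : ((ℝ × ℝ) ⧸ L) ≃ ((ℝ × ℝ) ⧸ L))
    (hinv : ∀ x, Mbar (φe x) = Mbar x)
    (hMN : ∀ Q : ℝ × ℝ, Mbar (QuotientAddGroup.mk Q) ≤ Nm Q)
    (e : ℝ) (he : 1 < e)
    -- the Barnes–Swinnerton-Dyer lemma:
    (hbsd : ∀ (x : (ℝ × ℝ) ⧸ L) (t : ℝ), Mbar x < t →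
      ∃ Q : ℝ × ℝ, (∃ k : ℤ, QuotientAddGroup.mk Q = (φe ^ k) x) ∧
        |Q.1| < Real.sqrt (e * t) ∧ |Q.2| < Real.sqrt (e * t) ∧ Nm Q < t)
    (P : (ℝ × ℝ) ⧸ L) :
    ∃ Q : ℝ × ℝ,
      QuotientAddGroup.mk Q ∈ closure (Set.range fun k : ℤ => (φe ^ k) P) ∧
      Nm Q = Mbar P ∧ Mbar (QuotientAddGroup.mk Q) = Mbar P := by
  classical
  set m := Mbar P with hm
  -- invariance of Mbar under integer powers of φe
  have h1 : ∀ x, Mbar (φe⁻¹ x) = Mbar x := by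
    intro x
    conv_rhs => rw [← (show φe (φe⁻¹ x) = x from Equiv.apply_symm_apply φe x), hinv]
  have hinvk : ∀ (k : ℤ) (x : (ℝ × ℝ) ⧸ L), Mbar ((φe ^ k) x) = Mbar x := by
    intro k
    induction k using Int.induction_on with
    | zero => intro x; simp
    | succ k ih =>
        intro x
        rw [zpow_add_one, Equiv.Perm.mul_apply, ih, hinv]
    | pred k ih =>
        intro x
        rw [zpow_sub_one, Equiv.Perm.mul_apply, ih, h1]
  have hepos : (0:ℝ) < e := lt_trans one_pos he
  have hmt : ∀ n : ℕ, m < m + ((n:ℝ)+1)⁻¹ := by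
    intro n
    have : (0:ℝ) < ((n:ℝ)+1)⁻¹ := by positivity
    linarith
  choose Qn hk hb1 hb2 hN using fun n : ℕ => hbsd P (m + ((n:ℝ)+1)⁻¹) (hmt n)
  set R := Real.sqrt (e * (m + 1)) with hR
  have hbound : ∀ n, Qn n ∈ Metric.closedBall (0 : ℝ × ℝ) R := by
    intro n
    have hle : Real.sqrt (e * (m + ((n:ℝ)+1)⁻¹)) ≤ R := by
      apply Real.sqrt_le_sqrt
      have h1 : ((n:ℝ)+1)⁻¹ ≤ 1 := by
        rw [inv_le_one_iff₀]; right; linarith [Nat.cast_nonneg (α := ℝ) n]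
      nlinarith
    rw [Metric.mem_closedBall, dist_zero_right]
    have : ‖Qn n‖ = max ‖(Qn n).1‖ ‖(Qn n).2‖ := rfl
    rw [this, Real.norm_eq_abs, Real.norm_eq_abs]
    exact max_le (le_trans (le_of_lt (hb1 n)) hle) (le_trans (le_of_lt (hb2 n)) hle)
  obtain ⟨Q, hQmem, σ, hσ, hconv⟩ :=
    (isCompact_closedBall (0 : ℝ × ℝ) R).tendsto_subseq hbound
  have hmkcont : Continuous (QuotientAddGroup.mk (s := L) : ℝ × ℝ → (ℝ × ℝ) ⧸ L) :=
    continuous_quotient_mk'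
  have hmkconv : Filter.Tendsto (fun i => (QuotientAddGroup.mk (Qn (σ i)) : (ℝ × ℝ) ⧸ L))
      Filter.atTop (nhds (QuotientAddGroup.mk Q)) :=
    (hmkcont.tendsto Q).comp hconv
  -- t (σ i) → m
  have htend : Filter.Tendsto (fun i : ℕ => m + ((σ i : ℝ)+1)⁻¹) Filter.atTop (nhds m) := by
    have h0 : Filter.Tendsto (fun n : ℕ => ((n:ℝ)+1)⁻¹) Filter.atTop (nhds 0) := by
      have := tendsto_one_div_add_atTop_nhds_zero_nat (𝕜 := ℝ)
      simpa [one_div] using this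
    have h0' := h0.comp hσ.tendsto_atTop
    have := tendsto_const_nhds (x := m) (f := Filter.atTop (α := ℕ)) |>.add h0'
    simpa using this
  -- Nm Q ≤ m
  have hNmQ : Nm Q ≤ m := by
    have hcont : Filter.Tendsto (fun i => Nm (Qn (σ i))) Filter.atTop (nhds (Nm Q)) := by
      have hc : Continuous Nm := by
        have : Nm = fun p : ℝ × ℝ => |p.1 * p.2| := funext hNm
        rw [this]
        exact (continuous_fst.mul continuous_snd).abs
      exact (hc.tendsto Q).comp hconv
    exact le_of_tendsto_of_tendsto' hcont htend (fun i => le_of_lt (hN (σ i)))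
  -- Mbar is constant = m along the sequence
  have hconst : ∀ i, Mbar (QuotientAddGroup.mk (Qn (σ i))) = m := by
    intro i
    obtain ⟨k, hkk⟩ := hk (σ i)
    rw [hkk, hinvk]
  -- m ≤ Mbar (mk Q) by upper semicontinuity
  have hge : m ≤ Mbar (QuotientAddGroup.mk Q) := by
    by_contra h
    push_neg at h
    have hev := hmkconv.eventually (husc (QuotientAddGroup.mk Q) m h)
    obtain ⟨i, hi⟩ := hev.exists
    rw [hconst i] at hi
    exact lt_irrefl m hi
  have hle : Mbar (QuotientAddGroup.mk Q) ≤ Nm Q := hMN Q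
  refine ⟨Q, ?_, ?_, ?_⟩
  · refine mem_closure_of_tendsto hmkconv ?_
    filter_upwards with i
    obtain ⟨k, hkk⟩ := hk (σ i)
    exact ⟨k, hkk.symm⟩
  · exact le_antisymm hNmQ (le_trans hge hle)
  · exact le_antisymm (le_trans hle hNmQ) hge
end

section
/- If P ∈ T_K is a K-point (i.e., has coordinates in K), then there exists N ∈ ℕ such that φ^k(NP) → 0 as |k| → ∞. -/
open NumberField IntermediateField Filter Polynomial

private lemma aux_tendsto_atTop {r : ℝ} (hr : |r| < 1) (c : ℝ) :
    Tendsto (fun k : ℤ => r ^ k * c) atTop (nhds 0) := by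
  have h1 : Tendsto (fun n : ℕ => r ^ n * c) atTop (nhds 0) := by
    simpa using (tendsto_pow_atTop_nhds_zero_of_abs_lt_one hr).mul_const c
  have h2 : Tendsto (fun k : ℤ => k.toNat) atTop atTop :=
    tendsto_atTop_atTop.mpr fun b => ⟨(b : ℤ), fun a ha => by omega⟩
  refine (h1.comp h2).congr' ?_
  filter_upwards [eventually_ge_atTop (0 : ℤ)] with k hk
  simp [Function.comp, ← zpow_natCast, Int.toNat_of_nonneg hk]

private lemma aux_tendsto_atBot {r : ℝ} (hr : 1 < |r|) (c : ℝ) :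
    Tendsto (fun k : ℤ => r ^ k * c) atBot (nhds 0) := by
  have hr0 : r ≠ 0 := by intro h; rw [h, abs_zero] at hr; linarith
  have hinv : |r⁻¹| < 1 := by
    rw [abs_inv]; rw [inv_lt_one_iff₀]; right; exact hr
  have := (aux_tendsto_atTop hinv c).comp tendsto_neg_atBot_atTop
  refine this.congr fun k => ?_
  simp [Function.comp, zpow_neg, inv_zpow]

private lemma aux_zpow_apply (L : AddSubgroup (ℝ × ℝ)) (sε e : ℝ) (hs : sε ≠ 0) (he : e ≠ 0)
    (φe : ((ℝ × ℝ) ⧸ L) ≃ ((ℝ × ℝ) ⧸ L))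
    (hφ : ∀ v : ℝ × ℝ, φe (QuotientAddGroup.mk v) = QuotientAddGroup.mk (sε * v.1, e * v.2)) :
    ∀ (k : ℤ) (v : ℝ × ℝ), (φe ^ k) (QuotientAddGroup.mk v)
      = QuotientAddGroup.mk (sε ^ k * v.1, e ^ k * v.2) := by
  have hsymm : ∀ w : ℝ × ℝ, φe.symm (QuotientAddGroup.mk w)
      = QuotientAddGroup.mk (sε⁻¹ * w.1, e⁻¹ * w.2) := by
    intro w
    apply φe.injective
    rw [Equiv.apply_symm_apply, hφ]
    simp [mul_inv_cancel_left₀ hs, mul_inv_cancel_left₀ he]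
  intro k
  induction k using Int.induction_on with
  | zero => intro v; simp
  | succ n ih =>
      intro v
      rw [zpow_add_one, Equiv.Perm.mul_apply, hφ, ih]
      simp only [zpow_add_one₀ hs, zpow_add_one₀ he]
      congr 1
      simp [mul_assoc]
  | pred n ih =>
      intro v
      rw [zpow_sub_one, Equiv.Perm.mul_apply, Equiv.Perm.inv_def, hsymm, ih]
      simp only [zpow_sub_one₀ hs, zpow_sub_one₀ he]
      congr 1
      simp [mul_assoc]

set_option maxHeartbeats 1000000 in
/-- If `P ∈ T_K` is a `K`-point (i.e., has a lift with stable/unstable coordinates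
in `K`), then there exists `N ∈ ℕ` such that `φ^k(N·P) → 0` as `|k| → ∞`. -/
theorem Kpoint_multiple_tendsto_zero
    (D : ℕ) (hD : Squarefree D) (hD1 : 1 < D)
    (K : IntermediateField ℚ ℝ) (hK : K = ℚ⟮(Real.sqrt D : ℝ)⟯)
    (σ : K →+* ℝ) (hσ : ∃ x : K, σ x ≠ (x : ℝ))
    (ι : K → ℝ × ℝ) (hι : ∀ a : K, ι a = (σ a, (a : ℝ)))
    (L : AddSubgroup (ℝ × ℝ)) (hL : (L : Set (ℝ × ℝ)) = ι '' {a : K | IsIntegral ℤ a})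
    (ε : K)
    (hfund : IsIntegral ℤ ε ∧ IsIntegral ℤ ε⁻¹ ∧ 1 < (ε : ℝ) ∧
      ∀ u : K, IsIntegral ℤ u → IsIntegral ℤ u⁻¹ →
        ∃ n : ℤ, u = ε ^ n ∨ u = -ε ^ n)
    (hσε : |σ ε| < 1)
    (φe : ((ℝ × ℝ) ⧸ L) ≃ ((ℝ × ℝ) ⧸ L))
    (hφ : ∀ v : ℝ × ℝ,
      φe (QuotientAddGroup.mk v) = QuotientAddGroup.mk (σ ε * v.1, (ε : ℝ) * v.2))
    (P : (ℝ × ℝ) ⧸ L)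
    (hP : ∃ a b : K, P = QuotientAddGroup.mk (((a : ℝ), (b : ℝ)) : ℝ × ℝ)) :
    ∃ N : ℕ, 0 < N ∧
      Tendsto (fun k : ℤ => (φe ^ k) (N • P)) cofinite (nhds 0) := by
  obtain ⟨hε_int, hεinv_int, hε1, -⟩ := hfund
  obtain ⟨a, b, rfl⟩ := hP
  subst hK
  have hD0 : (0:ℝ) ≤ (D:ℝ) := by positivity
  have hs2 : (Real.sqrt D : ℝ) ^ 2 = (D:ℝ) := Real.sq_sqrt hD0
  have hs_int : IsIntegral ℚ (Real.sqrt D : ℝ) := by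
    refine ⟨X ^ 2 - C (D:ℚ), monic_X_pow_sub_C _ (by norm_num), ?_⟩
    simp [hs2]
  haveI hfd : FiniteDimensional ℚ ℚ⟮(Real.sqrt D : ℝ)⟯ := IntermediateField.adjoin.finiteDimensional hs_int
  set pb := IntermediateField.adjoin.powerBasis hs_int with hpb
  set g : ℚ⟮(Real.sqrt D : ℝ)⟯ := IntermediateField.AdjoinSimple.gen ℚ (Real.sqrt D : ℝ) with hg
  have hgen : pb.gen = g := IntermediateField.adjoin.powerBasis_gen hs_int
  have hgcoe : (g : ℝ) = (Real.sqrt D : ℝ) := rfl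
  -- σ as a ℚ-algebra homomorphism
  set σ' : ℚ⟮(Real.sqrt D : ℝ)⟯ →ₐ[ℚ] ℝ := σ.toRatAlgHom with hσ'def
  have hσ'app : ∀ x : ℚ⟮(Real.sqrt D : ℝ)⟯, σ' x = σ x := fun x => rfl
  -- σ g = -(Real.sqrt D : ℝ)
  have hσg2 : (σ g) ^ 2 = (Real.sqrt D : ℝ) ^ 2 := by
    have hg2 : (g : ℚ⟮(Real.sqrt D : ℝ)⟯) ^ 2 = ((D:ℚ) : ℚ⟮(Real.sqrt D : ℝ)⟯) := by
      apply Subtype.ext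
      push_cast [hgcoe]
      rw [hs2]
    rw [← map_pow, hg2, map_ratCast, hs2]
    norm_num
  have hσg : σ g = -(Real.sqrt D : ℝ) := by
    rcases sq_eq_sq_iff_eq_or_eq_neg.mp hσg2 with h | h
    · exfalso
      obtain ⟨x, hx⟩ := hσ
      have heq : σ' = (ℚ⟮(Real.sqrt D : ℝ)⟯).val := by
        apply PowerBasis.algHom_ext pb
        rw [hgen]
        show σ g = (g : ℝ)
        rw [h, hgcoe]
      apply hx
      exact AlgHom.congr_fun heq x
    · exact h
  -- σ maps the field into itself
  have hσmem : ∀ x : ℚ⟮(Real.sqrt D : ℝ)⟯, σ x ∈ ℚ⟮(Real.sqrt D : ℝ)⟯ := by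
    intro x
    obtain ⟨f, rfl⟩ := pb.exists_eq_aeval' x
    have h1 : σ (aeval pb.gen f) = aeval ((algebraMap ℚ⟮(Real.sqrt D : ℝ)⟯ ℝ) (-g)) f := by
      rw [← hσ'app, ← Polynomial.aeval_algHom_apply]
      congr 1
      rw [hgen, hσ'app, hσg]
      simp [hgcoe]
    refine (congrArg (· ∈ ℚ⟮(Real.sqrt D : ℝ)⟯) h1).mpr ?_
    rw [Polynomial.aeval_algebraMap_apply]
    exact SetLike.coe_mem _
  -- conjugation as a ℚ-algebra endomorphism
  set τ : ℚ⟮(Real.sqrt D : ℝ)⟯ →ₐ[ℚ] ℚ⟮(Real.sqrt D : ℝ)⟯ :=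
    { toFun := fun x => ⟨σ x, hσmem x⟩
      map_one' := Subtype.ext (by simp)
      map_mul' := fun x y => Subtype.ext (by simp)
      map_zero' := Subtype.ext (by simp)
      map_add' := fun x y => Subtype.ext (by simp)
      commutes' := fun q => Subtype.ext (by
        show σ (algebraMap ℚ ℚ⟮(Real.sqrt D : ℝ)⟯ q) = ((algebraMap ℚ ℚ⟮(Real.sqrt D : ℝ)⟯ q : ℚ⟮(Real.sqrt D : ℝ)⟯) : ℝ)
        rw [eq_ratCast (algebraMap ℚ ℚ⟮(Real.sqrt D : ℝ)⟯) q, map_ratCast]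
        norm_cast) } with hτdef
  have hτcoe : ∀ x : ℚ⟮(Real.sqrt D : ℝ)⟯, ((τ x : ℚ⟮(Real.sqrt D : ℝ)⟯) : ℝ) = σ x := fun x => rfl
  have hτg : τ g = -g := by
    apply Subtype.ext
    rw [hτcoe, hσg]
    push_cast [hgcoe]
    ring
  have hττ : ∀ x : ℚ⟮(Real.sqrt D : ℝ)⟯, τ (τ x) = x := by
    have hcomp : τ.comp τ = AlgHom.id ℚ ℚ⟮(Real.sqrt D : ℝ)⟯ := by
      apply PowerBasis.algHom_ext pb
      rw [hgen]
      show τ (τ g) = g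
      rw [hτg, map_neg, hτg, neg_neg]
    intro x
    simpa using AlgHom.congr_fun hcomp x
  have hστ : ∀ x : ℚ⟮(Real.sqrt D : ℝ)⟯, σ (τ x) = (x : ℝ) := by
    intro x
    rw [← hτcoe (τ x), hττ x]
  have hτint : ∀ x : ℚ⟮(Real.sqrt D : ℝ)⟯, IsIntegral ℤ x → IsIntegral ℤ (τ x) := by
    intro x hx
    exact hx.map τ.toRingHom.toIntAlgHom
  -- integral multiples
  haveI : Algebra.IsAlgebraic ℚ ℚ⟮(Real.sqrt D : ℝ)⟯ := Algebra.IsAlgebraic.of_finite _ _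
  have key : ∀ (x : ℚ⟮(Real.sqrt D : ℝ)⟯), IsIntegral ℤ x → ∀ m : ℤ, IsIntegral ℤ ((m : ℚ⟮(Real.sqrt D : ℝ)⟯) * x) := by
    intro x hx m
    have h := (isIntegral_algebraMap (R := ℤ) (A := ℚ⟮(Real.sqrt D : ℝ)⟯) (x := m)).mul hx
    rwa [algebraMap_int_eq, eq_intCast] at h
  have hmult : ∀ x : ℚ⟮(Real.sqrt D : ℝ)⟯, ∃ n : ℤ, n ≠ 0 ∧ IsIntegral ℤ ((n : ℚ⟮(Real.sqrt D : ℝ)⟯) * x) := by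
    intro x
    have halg : IsAlgebraic ℤ x :=
      (IsFractionRing.isAlgebraic_iff ℤ ℚ ℚ⟮(Real.sqrt D : ℝ)⟯).mpr (Algebra.IsAlgebraic.isAlgebraic x)
    obtain ⟨n, hn, hint⟩ := halg.exists_integral_multiple
    refine ⟨n, hn, ?_⟩
    rwa [zsmul_eq_mul] at hint
  obtain ⟨n₁, hn₁, h1int⟩ := hmult a
  obtain ⟨n₂, hn₂, h2int⟩ := hmult b
  set N : ℕ := (n₁ * n₂).natAbs with hN_def
  have hNpos : 0 < N := Int.natAbs_pos.mpr (mul_ne_zero hn₁ hn₂)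
  set c : ℚ⟮(Real.sqrt D : ℝ)⟯ := (N : ℚ⟮(Real.sqrt D : ℝ)⟯) * a with hc_def
  set d : ℚ⟮(Real.sqrt D : ℝ)⟯ := (N : ℚ⟮(Real.sqrt D : ℝ)⟯) * b with hd_def
  have hNsplit : ∀ (x : ℚ⟮(Real.sqrt D : ℝ)⟯) (m : ℤ), IsIntegral ℤ ((m : ℚ⟮(Real.sqrt D : ℝ)⟯) * x) →
      (∃ u : ℤ, (N : ℤ) = u * m) → IsIntegral ℤ ((N : ℚ⟮(Real.sqrt D : ℝ)⟯) * x) := by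
    intro x m hm ⟨u, hu⟩
    have h2 := key _ hm u
    have heq : (N : ℚ⟮(Real.sqrt D : ℝ)⟯) * x = (u : ℚ⟮(Real.sqrt D : ℝ)⟯) * ((m : ℚ⟮(Real.sqrt D : ℝ)⟯) * x) := by
      have := congrArg (fun z : ℤ => ((z : ℚ⟮(Real.sqrt D : ℝ)⟯))) hu
      push_cast at this
      rw [this, mul_assoc]
    rwa [heq]
  have hNeq : ((N:ℤ) = n₁ * n₂) ∨ ((N:ℤ) = -(n₁ * n₂)) := by
    rcases Int.natAbs_eq (n₁ * n₂) with h | h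
    · left; exact h.symm
    · right; omega
  have hc_int : IsIntegral ℤ c := by
    rcases hNeq with h | h
    · exact hNsplit a n₁ h1int ⟨n₂, h.trans (mul_comm _ _)⟩
    · exact hNsplit a n₁ h1int ⟨-n₂, h.trans (by ring)⟩
  have hd_int : IsIntegral ℤ d := by
    rcases hNeq with h | h
    · exact hNsplit b n₂ h2int ⟨n₁, h⟩
    · exact hNsplit b n₂ h2int ⟨-n₁, h.trans (by ring)⟩
  -- lattice membership
  have hLmem : ∀ x : ℚ⟮(Real.sqrt D : ℝ)⟯, IsIntegral ℤ x → (σ x, (x:ℝ)) ∈ L := by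
    intro x hx
    have : (σ x, (x:ℝ)) ∈ (L : Set (ℝ × ℝ)) := by
      rw [hL]; exact ⟨x, hx, hι x⟩
    exact this
  -- facts about ε
  have hεR : (1:ℝ) < (ε:ℝ) := hε1
  have hεRpos : (0:ℝ) < (ε:ℝ) := by linarith
  have hε0 : ε ≠ 0 := by
    intro h
    rw [h] at hεR
    norm_num at hεR
  have hσε0 : σ ε ≠ 0 := fun h => hε0 (σ.injective (by rw [h, map_zero]))
  have hεk_int : ∀ k : ℤ, IsIntegral ℤ (ε ^ k) := by
    intro k
    rcases le_or_gt 0 k with hk | hk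
    · lift k to ℕ using hk
      rw [zpow_natCast]
      exact hε_int.pow _
    · have h : ε ^ k = (ε⁻¹) ^ ((-k).toNat) := by
        rw [← zpow_natCast, Int.toNat_of_nonneg (by omega), inv_zpow, ← zpow_neg, neg_neg]
      rw [h]
      exact hεinv_int.pow _
  have hcoe_zpow : ∀ (x : ℚ⟮(Real.sqrt D : ℝ)⟯) (k : ℤ), ((x ^ k : ℚ⟮(Real.sqrt D : ℝ)⟯) : ℝ) = (x:ℝ) ^ k := by
    intro x k
    exact map_zpow₀ (algebraMap ℚ⟮(Real.sqrt D : ℝ)⟯ ℝ) x k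
  -- reduction of N • P
  have hNP : (N : ℕ) • (QuotientAddGroup.mk (((a:ℝ), (b:ℝ))) : (ℝ × ℝ) ⧸ L)
      = QuotientAddGroup.mk (((c:ℝ), (d:ℝ))) := by
    rw [← QuotientAddGroup.mk_nsmul]
    congr 1
    rw [hc_def, hd_def]
    push_cast
    rw [Prod.smul_mk]
    push_cast
    simp only [Prod.mk.injEq, smul_eq_mul]
    constructor <;> ring
  have hmain : ∀ k : ℤ, (φe ^ k) ((N : ℕ) • (QuotientAddGroup.mk (((a:ℝ), (b:ℝ))) : (ℝ × ℝ) ⧸ L))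
      = QuotientAddGroup.mk ((σ ε ^ k * (c:ℝ), (ε:ℝ) ^ k * (d:ℝ)) : ℝ × ℝ) := by
    intro k
    rw [hNP, aux_zpow_apply L (σ ε) ((ε:ℝ)) hσε0 hεRpos.ne' φe hφ k]
  have hEq1 : ∀ k : ℤ, (QuotientAddGroup.mk ((σ ε ^ k * (c:ℝ), (ε:ℝ) ^ k * (d:ℝ)) : ℝ × ℝ)
        : (ℝ × ℝ) ⧸ L)
      = QuotientAddGroup.mk ((σ ε ^ k * ((c:ℝ) - σ d), 0) : ℝ × ℝ) := by
    intro k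
    rw [QuotientAddGroup.eq_iff_sub_mem]
    have hmem := hLmem (ε ^ k * d) ((hεk_int k).mul hd_int)
    have h2 : ((σ ε ^ k * (c:ℝ), (ε:ℝ) ^ k * (d:ℝ)) - (σ ε ^ k * ((c:ℝ) - σ d), 0) : ℝ × ℝ)
        = (σ (ε ^ k * d), ((ε ^ k * d : ℚ⟮(Real.sqrt D : ℝ)⟯) : ℝ)) := by
      have e1 : σ (ε ^ k * d) = σ ε ^ k * σ d := by
        rw [map_mul σ (ε ^ k) d, map_zpow₀ σ ε k]
      have e2 : ((ε ^ k * d : ℚ⟮(Real.sqrt D : ℝ)⟯) : ℝ) = (ε:ℝ) ^ k * (d:ℝ) := by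
        push_cast [hcoe_zpow]
        ring
      rw [e1, e2, Prod.mk_sub_mk]
      simp only [Prod.mk.injEq]
      constructor <;> ring
    rw [h2]
    exact hmem
  have hEq2 : ∀ k : ℤ, (QuotientAddGroup.mk ((σ ε ^ k * (c:ℝ), (ε:ℝ) ^ k * (d:ℝ)) : ℝ × ℝ)
        : (ℝ × ℝ) ⧸ L)
      = QuotientAddGroup.mk ((0, (ε:ℝ) ^ k * ((d:ℝ) - (τ c : ℝ))) : ℝ × ℝ) := by
    intro k
    rw [QuotientAddGroup.eq_iff_sub_mem]
    have hmem := hLmem (ε ^ k * τ c) ((hεk_int k).mul (hτint c hc_int))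
    have h2 : ((σ ε ^ k * (c:ℝ), (ε:ℝ) ^ k * (d:ℝ)) - (0, (ε:ℝ) ^ k * ((d:ℝ) - (τ c : ℝ))) : ℝ × ℝ)
        = (σ (ε ^ k * τ c), ((ε ^ k * τ c : ℚ⟮(Real.sqrt D : ℝ)⟯) : ℝ)) := by
      have e1 : σ (ε ^ k * τ c) = σ ε ^ k * (c : ℝ) := by
        rw [map_mul σ (ε ^ k) (τ c), map_zpow₀ σ ε k, hστ c]
      have e2 : ((ε ^ k * τ c : ℚ⟮(Real.sqrt D : ℝ)⟯) : ℝ) = (ε:ℝ) ^ k * ((τ c : ℚ⟮(Real.sqrt D : ℝ)⟯) : ℝ) := by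
        push_cast [hcoe_zpow]
        ring
      rw [e1, e2, Prod.mk_sub_mk]
      simp only [Prod.mk.injEq]
      constructor <;> ring
    rw [h2]
    exact hmem
  -- continuity of the quotient map
  have hmk_cont : Tendsto (QuotientAddGroup.mk : ℝ × ℝ → (ℝ × ℝ) ⧸ L)
      (nhds 0) (nhds (0 : (ℝ × ℝ) ⧸ L)) := by
    have h := (QuotientAddGroup.continuous_mk (N := L)).tendsto (0 : ℝ × ℝ)
    rwa [QuotientAddGroup.mk_zero] at h
  refine ⟨N, hNpos, ?_⟩
  rw [Int.cofinite_eq, tendsto_sup]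
  constructor
  · -- atBot
    have habs : 1 < |(ε:ℝ)| := by rwa [abs_of_pos hεRpos]
    have hinner : Tendsto (fun k : ℤ => (((0:ℝ), (ε:ℝ) ^ k * ((d:ℝ) - (τ c : ℝ))) : ℝ × ℝ))
        atBot (nhds 0) := by
      have := (tendsto_const_nhds : Tendsto (fun _ : ℤ => (0:ℝ)) atBot (nhds 0))
        |>.prodMk_nhds (aux_tendsto_atBot habs ((d:ℝ) - (τ c : ℝ)))
      exact this
    refine (hmk_cont.comp hinner).congr fun k => ?_
    show QuotientAddGroup.mk _ = _
    rw [← hEq2 k, ← hmain k]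
  · -- atTop
    have hinner : Tendsto (fun k : ℤ => ((σ ε ^ k * ((c:ℝ) - σ d), (0:ℝ)) : ℝ × ℝ))
        atTop (nhds 0) := by
      have := (aux_tendsto_atTop hσε ((c:ℝ) - σ d)).prodMk_nhds
        ((tendsto_const_nhds : Tendsto (fun _ : ℤ => (0:ℝ)) atTop (nhds 0)))
      exact this
    refine (hmk_cont.comp hinner).congr fun k => ?_
    show QuotientAddGroup.mk _ = _
    rw [← hEq1 k, ← hmain k]
end

section
/- If P ∈ T_K is a K-point, then M(P) ∈ K. -/
open NumberField IntermediateField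

/-- If `P ∈ T_K` is a `K`-point, then `M(P) ∈ K`. -/
theorem Kpoint_M_mem_K
    (D : ℕ) (hD : Squarefree D) (hD1 : 1 < D)
    (K : IntermediateField ℚ ℝ) (hK : K = ℚ⟮(Real.sqrt D : ℝ)⟯)
    (σ : K →+* ℝ) (hσ : ∃ x : K, σ x ≠ (x : ℝ))
    (ι : K → ℝ × ℝ) (hι : ∀ a : K, ι a = (σ a, (a : ℝ)))
    (L : AddSubgroup (ℝ × ℝ)) (hL : (L : Set (ℝ × ℝ)) = ι '' {a : K | IsIntegral ℤ a})
    (Nm : ℝ × ℝ → ℝ) (hNm : ∀ p, Nm p = |p.1 * p.2|)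
    (Mbar : (ℝ × ℝ) ⧸ L → ℝ)
    (ε : K)
    (φe : ((ℝ × ℝ) ⧸ L) ≃ ((ℝ × ℝ) ⧸ L))
    (hφ : ∀ v : ℝ × ℝ,
      φe (QuotientAddGroup.mk v) = QuotientAddGroup.mk (σ ε * v.1, (ε : ℝ) * v.2))
    (hinv : ∀ x, Mbar (φe x) = Mbar x)
    (P : (ℝ × ℝ) ⧸ L)
    -- `P` is a `K`-point:
    (hP : ∃ a b : K, P = QuotientAddGroup.mk (((a : ℝ), (b : ℝ)) : ℝ × ℝ))
    -- (a) the orbit closure of the `K`-point `P` consists of the orbit of `P`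
    -- together with finitely many torsion points:
    (ha : closure (Set.range fun k : ℤ => (φe ^ k) P) ⊆
        (Set.range fun k : ℤ => (φe ^ k) P) ∪
          {x : (ℝ × ℝ) ⧸ L | ∃ n : ℕ, 0 < n ∧ n • x = 0})
    (hafin : {x ∈ closure (Set.range fun k : ℤ => (φe ^ k) P) |
        ∃ n : ℕ, 0 < n ∧ n • x = 0}.Finite)
    -- (b) some representative of an element of the orbit closure realizes `M(P)`:
    (hb : ∃ Q : ℝ × ℝ,
        QuotientAddGroup.mk Q ∈ closure (Set.range fun k : ℤ => (φe ^ k) P) ∧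
        Nm Q = Mbar P)
    -- (c) `M` of a torsion point is rational:
    (hc : ∀ x : (ℝ × ℝ) ⧸ L, (∃ n : ℕ, 0 < n ∧ n • x = 0) → ∃ q : ℚ, Mbar x = q) :
    ∃ a : K, Mbar P = (a : ℝ) := by
  subst hK
  -- Step 1: σ maps K into K.
  have hA : ∀ x : ℚ⟮(Real.sqrt D : ℝ)⟯, ∃ y : ℚ⟮(Real.sqrt D : ℝ)⟯, σ x = (y : ℝ) := by
    have hd0 : (0:ℝ) ≤ (D:ℝ) := by positivity
    have htmem : (Real.sqrt D : ℝ) ∈ ℚ⟮(Real.sqrt D : ℝ)⟯ := mem_adjoin_simple_self ℚ _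
    set t : ℚ⟮(Real.sqrt D : ℝ)⟯ := ⟨Real.sqrt D, htmem⟩ with ht
    have ht2 : σ t * σ t = Real.sqrt D * Real.sqrt D := by
      rw [← map_mul]
      have h1 : t * t = (D : ℚ⟮(Real.sqrt D : ℝ)⟯) := by
        apply Subtype.ext
        push_cast [ht]
        exact Real.mul_self_sqrt hd0
      rw [h1, map_natCast, Real.mul_self_sqrt hd0]
    have hcases : σ t = Real.sqrt D ∨ σ t = -Real.sqrt D := mul_self_eq_mul_self_iff.mp ht2
    have hσt : ∃ y : ℚ⟮(Real.sqrt D : ℝ)⟯, σ t = (y : ℝ) := by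
      rcases hcases with h | h
      · exact ⟨t, h⟩
      · exact ⟨-t, by rw [h]; simp [ht]⟩
    rintro ⟨r, hr⟩
    refine adjoin_induction (F := ℚ) (E := ℝ)
      (p := fun r hr => ∃ y : ℚ⟮(Real.sqrt D : ℝ)⟯, σ ⟨r, hr⟩ = (y : ℝ)) ?_ ?_ ?_ ?_ ?_ hr
    · intro x hx
      rcases hx with rfl
      exact hσt
    · intro q
      refine ⟨algebraMap ℚ _ q, ?_⟩
      have h1 : (⟨algebraMap ℚ ℝ q, _root_.algebraMap_mem _ q⟩ : ℚ⟮(Real.sqrt D : ℝ)⟯)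
          = algebraMap ℚ _ q := rfl
      rw [h1]
      exact RingHom.congr_fun
        (Subsingleton.elim (σ.comp (algebraMap ℚ _)) (algebraMap ℚ ℝ)) q
    · rintro x y hx hy ⟨y1, h1⟩ ⟨y2, h2⟩
      refine ⟨y1 + y2, ?_⟩
      have h3 : (⟨x + y, add_mem hx hy⟩ : ℚ⟮(Real.sqrt D : ℝ)⟯) = ⟨x, hx⟩ + ⟨y, hy⟩ := rfl
      rw [h3, map_add, h1, h2]; push_cast; ring
    · rintro x hx ⟨y1, h1⟩
      refine ⟨y1⁻¹, ?_⟩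
      have h3 : (⟨x⁻¹, inv_mem hx⟩ : ℚ⟮(Real.sqrt D : ℝ)⟯)
          = (⟨x, hx⟩ : ℚ⟮(Real.sqrt D : ℝ)⟯)⁻¹ := rfl
      rw [h3, map_inv₀, h1]; norm_cast
    · rintro x y hx hy ⟨y1, h1⟩ ⟨y2, h2⟩
      refine ⟨y1 * y2, ?_⟩
      have h3 : (⟨x * y, mul_mem hx hy⟩ : ℚ⟮(Real.sqrt D : ℝ)⟯) = ⟨x, hx⟩ * ⟨y, hy⟩ := rfl
      rw [h3, map_mul, h1, h2]; push_cast; ring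
  obtain ⟨Q, hQcl, hQN⟩ := hb
  -- Step 2: it suffices that the coordinates of Q lie in K.
  suffices hQK : ∃ y1 y2 : ℚ⟮(Real.sqrt D : ℝ)⟯, Q.1 = (y1 : ℝ) ∧ Q.2 = (y2 : ℝ) by
    obtain ⟨y1, y2, h1, h2⟩ := hQK
    rw [← hQN, hNm, h1, h2]
    rcases abs_choice ((y1 : ℝ) * (y2 : ℝ)) with h | h
    · exact ⟨y1 * y2, by rw [h]; push_cast; ring⟩
    · exact ⟨-(y1 * y2), by rw [h]; push_cast; ring⟩
  -- Step 3: if mk Q = mk (u, v) with u, v ∈ K, then the coordinates of Q are in K.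
  have hB : ∀ u v : ℚ⟮(Real.sqrt D : ℝ)⟯,
      (QuotientAddGroup.mk Q : (ℝ × ℝ) ⧸ L) = QuotientAddGroup.mk (((u : ℝ), (v : ℝ)) : ℝ × ℝ) →
      ∃ y1 y2 : ℚ⟮(Real.sqrt D : ℝ)⟯, Q.1 = (y1 : ℝ) ∧ Q.2 = (y2 : ℝ) := by
    intro u v h
    rw [QuotientAddGroup.eq] at h
    have hmem : (-Q + (((u : ℝ), (v : ℝ)) : ℝ × ℝ)) ∈ (L : Set (ℝ × ℝ)) := h
    rw [hL] at hmem
    obtain ⟨m, _, hm⟩ := hmem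
    rw [hι] at hm
    obtain ⟨m', hm'⟩ := hA m
    have h1 : σ m = -Q.1 + (u : ℝ) := congrArg Prod.fst hm
    have h2 : (m : ℝ) = -Q.2 + (v : ℝ) := congrArg Prod.snd hm
    refine ⟨u - m', v - m, ?_, ?_⟩
    · rw [hm'] at h1; push_cast; linarith
    · push_cast; linarith
  -- Step 4: mk Q lies in the orbit of P or is torsion.
  rcases ha hQcl with ⟨k, hk⟩ | ⟨n, hn, hx⟩
  · -- orbit case
    obtain ⟨a, b, hPab⟩ := hP
    by_cases hε : ε = 0
    · -- degenerate case: the quotient is a single point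
      have hall : ∀ x y : (ℝ × ℝ) ⧸ L, x = y := by
        intro x y
        apply φe.injective
        obtain ⟨x', rfl⟩ := QuotientAddGroup.mk_surjective x
        obtain ⟨y', rfl⟩ := QuotientAddGroup.mk_surjective y
        rw [hφ, hφ, hε]
        simp
      exact hB 0 0 (hall _ _)
    · obtain ⟨ε', hε'⟩ := hA ε
      have hσε : σ ε ≠ 0 := by
        intro h0
        apply hε
        apply RingHom.injective σ
        rw [h0, map_zero]
      have hε'0 : ε' ≠ 0 := by
        intro h0
        apply hσε
        rw [hε', h0]; simp
      have hε'R : ((ε' : ℝ)) ≠ 0 := by exact_mod_cast hε'0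
      have hεR : ((ε : ℝ)) ≠ 0 := by exact_mod_cast hε
      have key : ∀ j : ℤ, ∃ u v : ℚ⟮(Real.sqrt D : ℝ)⟯,
          (φe ^ j) P = QuotientAddGroup.mk (((u : ℝ), (v : ℝ)) : ℝ × ℝ) := by
        intro j
        induction j using Int.induction_on with
        | zero => exact ⟨a, b, by rw [zpow_zero]; simpa using hPab⟩
        | succ n ih =>
          obtain ⟨u, v, huv⟩ := ih
          refine ⟨ε' * u, ε * v, ?_⟩
          have hstep : (φe ^ ((n : ℤ) + 1)) P = φe ((φe ^ (n : ℤ)) P) := by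
            rw [add_comm, zpow_add, zpow_one, Equiv.Perm.mul_apply]
          rw [hstep, huv, hφ]
          congr 1
          refine Prod.ext ?_ ?_
          · show σ ε * (u : ℝ) = ((ε' * u : ℚ⟮(Real.sqrt D : ℝ)⟯) : ℝ)
            rw [hε']; push_cast; ring
          · show (ε : ℝ) * (v : ℝ) = ((ε * v : ℚ⟮(Real.sqrt D : ℝ)⟯) : ℝ)
            push_cast; ring
        | pred n ih =>
          obtain ⟨u, v, huv⟩ := ih
          refine ⟨u / ε', v / ε, ?_⟩
          have hstep : φe ((φe ^ (-(n : ℤ) - 1)) P) = (φe ^ (-(n : ℤ))) P := by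
            rw [← Equiv.Perm.mul_apply, ← zpow_one_add]
            norm_num
          apply φe.injective
          rw [hstep, huv, hφ]
          congr 1
          refine (Prod.ext ?_ ?_).symm
          · show σ ε * ((u / ε' : ℚ⟮(Real.sqrt D : ℝ)⟯) : ℝ) = (u : ℝ)
            rw [hε']
            have hcu : ε' * (u / ε') = u := by field_simp
            exact_mod_cast congrArg (fun z : ℚ⟮(Real.sqrt D : ℝ)⟯ => (z : ℝ)) hcu
          · show (ε : ℝ) * ((v / ε : ℚ⟮(Real.sqrt D : ℝ)⟯) : ℝ) = (v : ℝ)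
            have hcv : ε * (v / ε) = v := by field_simp
            exact_mod_cast congrArg (fun z : ℚ⟮(Real.sqrt D : ℝ)⟯ => (z : ℝ)) hcv
      obtain ⟨u, v, huv⟩ := key k
      have hk' : (φe ^ k) P = QuotientAddGroup.mk Q := hk
      exact hB u v (by rw [← hk', huv])
  · -- torsion case
    have hmem : ((n • Q : ℝ × ℝ)) ∈ (L : Set (ℝ × ℝ)) := by
      rw [SetLike.mem_coe, ← QuotientAddGroup.eq_zero_iff]
      have : (QuotientAddGroup.mk (n • Q) : (ℝ × ℝ) ⧸ L)
          = n • (QuotientAddGroup.mk Q : (ℝ × ℝ) ⧸ L) :=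
        map_nsmul (QuotientAddGroup.mk' L) n Q
      rw [this]
      exact hx
    rw [hL] at hmem
    obtain ⟨m, _, hm⟩ := hmem
    rw [hι] at hm
    obtain ⟨m', hm'⟩ := hA m
    have hn' : ((n : ℝ)) ≠ 0 := Nat.cast_ne_zero.mpr hn.ne'
    have h1 : σ m = (n : ℝ) * Q.1 := by
      have := congrArg Prod.fst hm
      simpa [nsmul_eq_mul] using this
    have h2 : (m : ℝ) = (n : ℝ) * Q.2 := by
      have := congrArg Prod.snd hm
      simpa [nsmul_eq_mul] using this
    refine ⟨m' / (n : ℚ⟮(Real.sqrt D : ℝ)⟯), m / (n : ℚ⟮(Real.sqrt D : ℝ)⟯), ?_, ?_⟩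
    · rw [hm'] at h1
      have hco : ((m' / (n : ℚ⟮(Real.sqrt D : ℝ)⟯) : ℚ⟮(Real.sqrt D : ℝ)⟯) : ℝ)
          = (m' : ℝ) / (n : ℝ) := by norm_cast
      rw [hco, eq_div_iff hn']
      linarith
    · have hco : ((m / (n : ℚ⟮(Real.sqrt D : ℝ)⟯) : ℚ⟮(Real.sqrt D : ℝ)⟯) : ℝ)
          = (m : ℝ) / (n : ℝ) := by norm_cast
      rw [hco, eq_div_iff hn']
      linarith
end

section
/- If P ∈ T_K is a Q-point (P ∈ K/O_K), then P is determinate and M(P) ∈ Q: there exists a representative Q of a point in the finite orbit of P with N(Q) = M(P), and this value is rational. -/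
open NumberField IntermediateField


private lemma zpow_fixed' {X : Type*} (e : Equiv.Perm X) (P : X) (h : e P = P) :
    ∀ k : ℤ, (e ^ k) P = P := by
  have hinv : e⁻¹ P = P := by
    conv_lhs => rw [← h]
    exact e.symm_apply_apply P
  intro k
  induction k using Int.induction_on with
  | zero => rfl
  | succ i ih => rw [zpow_add_one, Equiv.Perm.mul_apply, h, ih]
  | pred i ih => rw [zpow_sub_one, Equiv.Perm.mul_apply, hinv, ih]


/-- If `P ∈ T_K` is a `ℚ`-point (i.e. `P ∈ K/𝓞_K`, equivalently `P` has rational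
coordinates with respect to the `ℤ`-basis `{1, α_K}` of `𝓞_K`), then `P` is
determinate and `M(P) ∈ ℚ`: there exists a representative `Q` of a point of the
finite orbit of `P` with `N(Q) = M(P)`, and this value is rational. -/
theorem Qpoint_determinate_and_M_rational
    (D : ℕ) (hD : Squarefree D) (hD1 : 1 < D)
    (K : IntermediateField ℚ ℝ) (hK : K = ℚ⟮(Real.sqrt D : ℝ)⟯)
    (σ : K →+* ℝ) (hσ : ∃ x : K, σ x ≠ (x : ℝ))
    (ι : K → ℝ × ℝ) (hι : ∀ a : K, ι a = (σ a, (a : ℝ)))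
    (α : K) (hα : (α : ℝ) = if D % 4 = 1 then (1 + Real.sqrt D) / 2 else Real.sqrt D)
    (hbasis : ∀ a : K, IsIntegral ℤ a ↔ ∃ m n : ℤ, a = (m : K) + (n : K) * α)
    (L : AddSubgroup (ℝ × ℝ)) (hL : (L : Set (ℝ × ℝ)) = ι '' {a : K | IsIntegral ℤ a})
    (Nm : ℝ × ℝ → ℝ) (hNm : ∀ p, Nm p = |p.1 * p.2|)
    (Mbar : (ℝ × ℝ) ⧸ L → ℝ)
    (φe : ((ℝ × ℝ) ⧸ L) ≃ ((ℝ × ℝ) ⧸ L))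
    (hinv : ∀ x, Mbar (φe x) = Mbar x)
    -- the orbit-closure lemma:
    (horb : ∀ x : (ℝ × ℝ) ⧸ L, ∃ Q : ℝ × ℝ,
        QuotientAddGroup.mk Q ∈ closure (Set.range fun k : ℤ => (φe ^ k) x) ∧
        Nm Q = Mbar x)
    -- `N` of a point with rational `(x,y)`-coordinates is rational:
    (hratN : ∀ x y : ℚ, ∃ q : ℚ, Nm ((x : ℝ) • ι 1 + (y : ℝ) • ι α) = q)
    -- the orbit of a `ℚ`-point consists of `ℚ`-points:
    (hφQ : ∀ x : (ℝ × ℝ) ⧸ L,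
        (∃ x0 y0 : ℚ, x = QuotientAddGroup.mk ((x0 : ℝ) • ι 1 + (y0 : ℝ) • ι α)) →
        ∀ k : ℤ, ∃ x1 y1 : ℚ,
          (φe ^ k) x = QuotientAddGroup.mk ((x1 : ℝ) • ι 1 + (y1 : ℝ) • ι α))
    (P : (ℝ × ℝ) ⧸ L)
    -- `P` is a `ℚ`-point:
    (hP : ∃ x y : ℚ, P = QuotientAddGroup.mk ((x : ℝ) • ι 1 + (y : ℝ) • ι α))
    -- `ℚ`-points are periodic:
    (hper : ∃ n : ℕ, 0 < n ∧ (φe ^ n) P = P) :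
    (∃ Q : ℝ × ℝ, (∃ k : ℤ, QuotientAddGroup.mk Q = (φe ^ k) P) ∧ Nm Q = Mbar P) ∧
    ∃ q : ℚ, Mbar P = q := by
  obtain ⟨n, hn, hfix⟩ := hper
  -- key computation for ι on integral elements
  have key : ∀ (m n : ℤ), ι ((m : K) + (n : K) * α) = (m : ℝ) • ι 1 + (n : ℝ) • ι α := by
    intro m n
    rw [hι, hι, hι]
    have h1 : σ ((m : K) + (n : K) * α) = (m : ℝ) + (n : ℝ) * σ α := by
      simp [map_add, map_mul, map_intCast]
    have h2 : (((m : K) + (n : K) * α : K) : ℝ) = (m : ℝ) + (n : ℝ) * (α : ℝ) := by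
      push_cast
      ring
    simp [Prod.ext_iff, h1, h2, map_one, smul_eq_mul]
  -- membership in L
  have hmemL : ∀ p : ℝ × ℝ, p ∈ L ↔ ∃ m n : ℤ, p = (m : ℝ) • ι 1 + (n : ℝ) • ι α := by
    intro p
    constructor
    · intro hp
      have hp' : p ∈ (L : Set (ℝ × ℝ)) := hp
      rw [hL] at hp'
      obtain ⟨a, ha, rfl⟩ := hp'
      obtain ⟨m, n, hmn⟩ := (hbasis a).1 ha
      exact ⟨m, n, by rw [hmn, key]⟩
    · rintro ⟨m, n, rfl⟩
      have hi : IsIntegral ℤ ((m : K) + (n : K) * α) := (hbasis _).2 ⟨m, n, rfl⟩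
      show ((m : ℝ) • ι 1 + (n : ℝ) • ι α) ∈ (L : Set (ℝ × ℝ))
      rw [hL]
      exact ⟨_, hi, key m n⟩
  -- σ α ≠ α
  have hσα : σ α ≠ (α : ℝ) := by
    intro hEq
    obtain ⟨x, hx⟩ := hσ
    apply hx
    have hsqD : IsIntegral ℚ (Real.sqrt D) := by
      refine ⟨Polynomial.X ^ 2 - Polynomial.C (D : ℚ), Polynomial.monic_X_pow_sub_C _ two_ne_zero, ?_⟩
      simp [Real.sq_sqrt (Nat.cast_nonneg D : (0:ℝ) ≤ D)]
    haveI : FiniteDimensional ℚ K := by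
      rw [hK]; exact IntermediateField.adjoin.finiteDimensional hsqD
    have halg : IsAlgebraic ℤ x :=
      (IsFractionRing.isAlgebraic_iff ℤ ℚ K).mpr (IsIntegral.of_finite ℚ x).isAlgebraic
    obtain ⟨y, hy0, hyint⟩ := halg.exists_integral_multiple
    have hzint : IsIntegral ℤ ((y : K) * x) := by simpa [zsmul_eq_mul] using hyint
    obtain ⟨m, n', hmn⟩ := (hbasis _).1 hzint
    have heq : (y : K) * x = (m : K) + (n' : K) * α := hmn
    have e1 : (y : ℝ) * σ x = (m : ℝ) + (n' : ℝ) * σ α := by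
      have := congrArg σ heq
      simpa [map_mul, map_add, map_intCast] using this
    have e2 : (y : ℝ) * (x : ℝ) = (m : ℝ) + (n' : ℝ) * (α : ℝ) := by
      have := congrArg (fun t : K => (t : ℝ)) heq
      push_cast at this
      simpa using this
    rw [hEq] at e1
    have hy0' : (y : ℝ) ≠ 0 := Int.cast_ne_zero.mpr hy0
    exact mul_left_cancel₀ hy0' (e1.trans e2.symm)
  -- the lattice is closed
  have hv1 : ι 1 = ((1 : ℝ), (1 : ℝ)) := by rw [hι]; simp
  have hv2 : ι α = (σ α, (α : ℝ)) := hι α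
  have hli : LinearIndependent ℝ ![ι 1, ι α] := by
    rw [LinearIndependent.pair_iff]
    intro s t hst
    rw [hv1, hv2] at hst
    have h1 := congrArg Prod.fst hst
    have h2 := congrArg Prod.snd hst
    simp [smul_eq_mul] at h1 h2
    have ht : t = 0 := by
      by_contra ht0
      apply hσα
      have : t * σ α = t * (α : ℝ) := by linarith
      exact mul_left_cancel₀ ht0 this
    constructor
    · rw [ht] at h1; simpa using h1
    · exact ht
  have hcard : Fintype.card (Fin 2) = Module.finrank ℝ (ℝ × ℝ) := by
    simp [Module.finrank_prod, Module.finrank_self]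
  let b := basisOfLinearIndependentOfCardEqFinrank hli hcard
  have hrange : Set.range ⇑b = {ι 1, ι α} := by
    rw [coe_basisOfLinearIndependentOfCardEqFinrank]
    exact Matrix.range_cons_cons_empty _ _ _
  have hLset : (L : Set (ℝ × ℝ)) =
      ((Submodule.span ℤ (Set.range ⇑b)).toAddSubgroup : Set (ℝ × ℝ)) := by
    ext p
    rw [hrange]
    simp only [SetLike.mem_coe, Submodule.mem_toAddSubgroup, Submodule.mem_span_pair]
    rw [hmemL p]
    constructor
    · rintro ⟨m, n', rfl⟩
      exact ⟨m, n', by rw [Int.cast_smul_eq_zsmul ℝ, Int.cast_smul_eq_zsmul ℝ]⟩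
    · rintro ⟨m, n', rfl⟩
      exact ⟨m, n', by rw [Int.cast_smul_eq_zsmul ℝ, Int.cast_smul_eq_zsmul ℝ]⟩
  haveI hclosed : IsClosed (L : Set (ℝ × ℝ)) := by
    rw [hLset]
    exact AddSubgroup.isClosed_of_discrete
  haveI : T1Space ((ℝ × ℝ) ⧸ L) := inferInstance
  -- the orbit is finite
  have horbred : ∀ k : ℤ, (φe ^ k) P = (φe ^ (k % (n : ℤ))) P := by
    intro k
    have hdecomp : k = k % (n : ℤ) + (n : ℤ) * (k / (n : ℤ)) := (Int.emod_add_mul_ediv k n).symm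
    have hsplit : φe ^ k = φe ^ (k % (n : ℤ)) * (φe ^ (n : ℤ)) ^ (k / (n : ℤ)) := by
      rw [← zpow_mul, ← zpow_add, ← hdecomp]
    rw [hsplit, Equiv.Perm.mul_apply]
    congr 1
    exact zpow_fixed' (φe ^ (n : ℤ)) P (by rw [zpow_natCast]; exact hfix) _
  have hfin : (Set.range fun k : ℤ => (φe ^ k) P).Finite := by
    apply Set.Finite.subset (Set.finite_range fun j : Fin n => (φe ^ (j : ℕ)) P)
    rintro _ ⟨k, rfl⟩
    have h1 : 0 ≤ k % (n : ℤ) := Int.emod_nonneg k (by exact_mod_cast hn.ne')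
    have h2 : k % (n : ℤ) < (n : ℤ) := Int.emod_lt_of_pos k (by exact_mod_cast hn)
    refine ⟨⟨(k % (n : ℤ)).toNat, by omega⟩, ?_⟩
    show (φe ^ ((k % (n : ℤ)).toNat)) P = (φe ^ k) P
    rw [horbred k, ← Int.toNat_of_nonneg h1, zpow_natCast]
    congr 1
    try omega
  -- conclude
  obtain ⟨Q, hQcl, hQN⟩ := horb P
  rw [hfin.isClosed.closure_eq] at hQcl
  obtain ⟨k, hk⟩ := hQcl
  refine ⟨⟨Q, ⟨k, hk.symm⟩, hQN⟩, ?_⟩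
  obtain ⟨x1, y1, hxy⟩ := hφQ P hP k
  have hQR : QuotientAddGroup.mk Q =
      QuotientAddGroup.mk ((x1 : ℝ) • ι 1 + (y1 : ℝ) • ι α) := hk.symm.trans hxy
  have hsub : -Q + ((x1 : ℝ) • ι 1 + (y1 : ℝ) • ι α) ∈ L := (QuotientAddGroup.eq).1 hQR
  have hdiff : Q - ((x1 : ℝ) • ι 1 + (y1 : ℝ) • ι α) ∈ L := by
    have h := neg_mem hsub
    have heq2 : -(-Q + ((x1 : ℝ) • ι 1 + (y1 : ℝ) • ι α)) =
        Q - ((x1 : ℝ) • ι 1 + (y1 : ℝ) • ι α) := by abel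
    rwa [heq2] at h
  obtain ⟨m, n', hmn⟩ := (hmemL _).1 hdiff
  have hQeq : Q = ((x1 + m : ℚ) : ℝ) • ι 1 + ((y1 + n' : ℚ) : ℝ) • ι α := by
    have hre : Q = ((x1 : ℝ) • ι 1 + (y1 : ℝ) • ι α) +
        (Q - ((x1 : ℝ) • ι 1 + (y1 : ℝ) • ι α)) := by abel
    rw [hmn] at hre
    rw [hre]
    push_cast
    rw [add_smul, add_smul]
    abel
  obtain ⟨q, hq⟩ := hratN (x1 + m) (y1 + n')
  exact ⟨q, by rw [← hQN, hQeq, hq]⟩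
end

section
/- For K = Q(√5) the sequence of Euclidean minima M_{i+1} = (f_{6i−2} + f_{6i−4}) / (4(f_{6i−1} + f_{6i−3} − 2)), where f_k is the k-th Fibonacci number, is strictly decreasing and converges to (−1+√5)/8. -/
open Filter Real goldenRatio

lemma cass (m : ℕ) : ((Nat.fib (2*m+1) : ℝ))^2 =
    (Nat.fib (2*m+1) : ℝ) * (Nat.fib (2*m) : ℝ) + (Nat.fib (2*m) : ℝ)^2 + 1 := by
  induction m with
  | zero => simp
  | succ k ih =>
    have e1 : 2*(k+1)+1 = (2*k+1)+2 := by ring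
    have e2 : 2*(k+1) = 2*k+2 := by ring
    rw [e1, e2, Nat.fib_add_two, Nat.fib_add_two]
    push_cast
    nlinarith [ih]

lemma pow6 {x : ℝ} (hx : |x| < 1) :
    Tendsto (fun i : ℕ => x ^ (6*i+2)) atTop (nhds 0) := by
  have h := tendsto_pow_atTop_nhds_zero_of_abs_lt_one hx
  have hm : Tendsto (fun i : ℕ => 6*i+2) atTop atTop :=
    tendsto_atTop_mono (fun i => by simp; omega) tendsto_id
  exact h.comp hm

/-- For `K = ℚ(√5)`, the sequence of Euclidean minima
`M_{i+1} = (f_{6i−2} + f_{6i−4}) / (4(f_{6i−1} + f_{6i−3} − 2))` (for `i ≥ 1`, with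
`f_k` the `k`-th Fibonacci number; here reindexed by `i ↦ i + 1`) is strictly
decreasing and converges to `(−1 + √5)/8`. -/
theorem euclidean_minima_sqrt5_strictAnti_tendsto
    (M : ℕ → ℝ)
    (hM : ∀ i : ℕ, M i =
      ((Nat.fib (6 * (i + 1) - 2) : ℝ) + (Nat.fib (6 * (i + 1) - 4) : ℝ)) /
        (4 * ((Nat.fib (6 * (i + 1) - 1) : ℝ) + (Nat.fib (6 * (i + 1) - 3) : ℝ) - 2))) :
    StrictAnti M ∧ Tendsto M atTop (nhds ((-1 + Real.sqrt 5) / 8)) := by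
  set s := Real.sqrt 5 with hs_def
  have hs2 : s^2 = 5 := Real.sq_sqrt (by norm_num)
  have hs_pos : 0 < s := Real.sqrt_pos.mpr (by norm_num)
  have hs_ne : s ≠ 0 := ne_of_gt hs_pos
  set P : ℕ → ℝ := fun i => (Nat.fib (6*i+2) : ℝ) with hP_def
  set Q : ℕ → ℝ := fun i => (Nat.fib (6*i+3) : ℝ) with hQ_def
  have hshift : ∀ i n : ℕ, (Nat.fib (6*i+2+(n+1)) : ℝ)
      = Nat.fib n * P i + Nat.fib (n+1) * Q i := by
    intro i n
    have h1 : 6*i+2+(n+1) = 6*i+2+n+1 := by omega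
    rw [h1, Nat.fib_add]
    have h2 : 6*i+2+1 = 6*i+3 := by omega
    rw [h2]
    push_cast
    ring
  have f1 : Nat.fib 1 = 1 := rfl
  have f2 : Nat.fib 2 = 1 := rfl
  have f3 : Nat.fib 3 = 2 := rfl
  have f5 : Nat.fib 5 = 5 := rfl
  have f6 : Nat.fib 6 = 8 := rfl
  have f7 : Nat.fib 7 = 13 := rfl
  have f8 : Nat.fib 8 = 21 := rfl
  have f9 : Nat.fib 9 = 34 := rfl
  have hMf : ∀ i, M i = (2*P i + Q i)/(4*(P i + 3*Q i - 2)) := by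
    intro i
    rw [hM i]
    have e2 : 6*(i+1)-2 = 6*i+2+(1+1) := by omega
    have e4 : 6*(i+1)-4 = 6*i+2 := by omega
    have e1 : 6*(i+1)-1 = 6*i+2+(2+1) := by omega
    have e3 : 6*(i+1)-3 = 6*i+3 := by omega
    rw [e2, e4, e1, e3, hshift, hshift, f1, f2, f3]
    push_cast
    congr 1 <;> ring
  have hMf2 : ∀ i, M (i+1) = (18*P i + 29*Q i)/(4*(29*P i + 47*Q i - 2)) := by
    intro i
    rw [hM (i+1)]
    have e2 : 6*(i+1+1)-2 = 6*i+2+(7+1) := by omega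
    have e4 : 6*(i+1+1)-4 = 6*i+2+(5+1) := by omega
    have e1 : 6*(i+1+1)-1 = 6*i+2+(8+1) := by omega
    have e3 : 6*(i+1+1)-3 = 6*i+2+(6+1) := by omega
    rw [e2, e4, e1, e3, hshift, hshift, hshift, hshift, f5, f6, f7, f8, f9]
    push_cast
    congr 1 <;> ring
  have hP1 : ∀ i, 1 ≤ P i := by
    intro i
    have h : Nat.fib 2 ≤ Nat.fib (6*i+2) := Nat.fib_mono (by omega)
    rw [f2] at h
    simp only [hP_def]
    exact_mod_cast h
  have hQ2 : ∀ i, 2 ≤ Q i := by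
    intro i
    have h : Nat.fib 3 ≤ Nat.fib (6*i+3) := Nat.fib_mono (by omega)
    rw [f3] at h
    simp only [hQ_def]
    exact_mod_cast h
  have hcass : ∀ i, Q i^2 = Q i * P i + P i^2 + 1 := by
    intro i
    have h := cass (3*i+1)
    have e1 : 2*(3*i+1)+1 = 6*i+3 := by omega
    have e2 : 2*(3*i+1) = 6*i+2 := by omega
    rw [e1, e2] at h
    exact h
  constructor
  · apply strictAnti_nat_of_succ_lt
    intro i
    rw [hMf2 i, hMf i]
    have h1 := hP1 i
    have h2 := hQ2 i
    have d1 : 0 < 4*(P i + 3*Q i - 2) := by nlinarith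
    have d2 : 0 < 4*(29*P i + 47*Q i - 2) := by nlinarith
    rw [div_lt_div_iff₀ d2 d1]
    nlinarith [hcass i]
  · have hφ1 : (1:ℝ) < φ := one_lt_goldenRatio
    have hψn : ψ < 0 := goldenConj_neg
    have hψm : -1 < ψ := neg_one_lt_goldenConj
    have hφ0 : (0:ℝ) < φ := goldenRatio_pos
    have hx : |ψ/φ| < 1 := by
      rw [abs_div, abs_of_pos hφ0, div_lt_one hφ0, abs_of_neg hψn]
      linarith
    have hy : |φ⁻¹| < 1 := by
      rw [abs_of_pos (inv_pos.mpr hφ0)]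
      exact inv_lt_one_of_one_lt₀ hφ1
    have keynum : ∀ u v a b : ℝ, a ≠ 0 →
        (2*((a-b)/s) + (a*u-b*v)/s) * (s/a) = (2+u) - (2+v)*(b/a) := by
      intro u v a b ha
      field_simp
      ring
    have keyden : ∀ u v a b : ℝ, a ≠ 0 →
        (4*((a-b)/s + 3*((a*u-b*v)/s) - 2)) * (s/a)
          = 4*((1+3*u) - (1+3*v)*(b/a) - 2*s*a⁻¹) := by
      intro u v a b ha
      field_simp
      ring
    have hg : ∀ i, M i = ((2+φ) - (2+ψ)*(ψ/φ)^(6*i+2)) /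
        (4*((1+3*φ) - (1+3*ψ)*(ψ/φ)^(6*i+2) - 2*s*(φ⁻¹)^(6*i+2))) := by
      intro i
      rw [hMf i, div_pow, inv_pow]
      have hbP : P i = (φ^(6*i+2) - ψ^(6*i+2))/s := by
        simp only [hP_def]; rw [Real.coe_fib_eq]
      have hbQ : Q i = (φ^(6*i+2)*φ - ψ^(6*i+2)*ψ)/s := by
        simp only [hQ_def]; rw [Real.coe_fib_eq]
        have h3 : 6*i+3 = (6*i+2)+1 := by omega
        rw [h3, pow_succ φ (6*i+2), pow_succ ψ (6*i+2)]
      have hφn : φ^(6*i+2) ≠ 0 := pow_ne_zero _ (ne_of_gt hφ0)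
      have hc : s/φ^(6*i+2) ≠ 0 := div_ne_zero hs_ne hφn
      calc (2*P i + Q i)/(4*(P i + 3*Q i - 2))
          = ((2*P i + Q i)*(s/φ^(6*i+2)))/((4*(P i + 3*Q i - 2))*(s/φ^(6*i+2))) := by
            rw [mul_div_mul_right _ _ hc]
        _ = ((2+φ) - (2+ψ)*(ψ^(6*i+2)/φ^(6*i+2))) /
            (4*((1+3*φ) - (1+3*ψ)*(ψ^(6*i+2)/φ^(6*i+2)) - 2*s*(φ^(6*i+2))⁻¹)) := by
            rw [hbP, hbQ, keynum φ ψ _ _ hφn, keyden φ ψ _ _ hφn]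
    have hMg : M = fun i => ((2+φ) - (2+ψ)*(ψ/φ)^(6*i+2)) /
        (4*((1+3*φ) - (1+3*ψ)*(ψ/φ)^(6*i+2) - 2*s*(φ⁻¹)^(6*i+2))) := funext hg
    rw [hMg]
    have t1 := pow6 hx
    have t2 := pow6 hy
    have tnum : Tendsto (fun i : ℕ => (2+φ) - (2+ψ)*(ψ/φ)^(6*i+2)) atTop
        (nhds ((2+φ) - (2+ψ)*0)) := tendsto_const_nhds.sub (tendsto_const_nhds.mul t1)
    have tden : Tendsto (fun i : ℕ => 4*((1+3*φ) - (1+3*ψ)*(ψ/φ)^(6*i+2) - 2*s*(φ⁻¹)^(6*i+2)))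
        atTop (nhds (4*((1+3*φ) - (1+3*ψ)*0 - 2*s*0))) :=
      ((tendsto_const_nhds.sub (tendsto_const_nhds.mul t1)).sub
        (tendsto_const_nhds.mul t2)).const_mul 4
    have hdenne : 4*((1+3*φ) - (1+3*ψ)*0 - 2*s*0) ≠ 0 := by
      have h : (0:ℝ) < 4*(1+3*φ) := by nlinarith
      simpa using ne_of_gt h
    have final := tnum.div tden hdenne
    have hL : ((2+φ) - (2+ψ)*0) / (4*((1+3*φ) - (1+3*ψ)*0 - 2*s*0)) = (-1+s)/8 := by
      have hden : (0:ℝ) < 4*(1+3*φ) := by nlinarith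
      rw [mul_zero, sub_zero, mul_zero, mul_zero, sub_zero, sub_zero,
        div_eq_div_iff (ne_of_gt hden) (by norm_num)]
      show (2+(1+s)/2)*8 = (-1+s)*(4*(1+3*((1+s)/2)))
      nlinarith
    rwa [hL] at final
end
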